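/- Let ξ be a real irrational number that is not a Liouville number (i.e., μ(ξ) < +∞). Then the density exponent of ξ satisfies ν(ξ) = 0. -/

import Mathlib

open Filter Topology

/-- The irrationality exponent of a real number, as an extended real:
the infimum of all real `μ` such that `|ξ - p/q| > 1/q^μ` for all integers `p, q`
with `q` sufficiently large (`⊤` if no such real `μ` exists). -/
noncomputable def irrationalityExponent (ξ : ℝ) : EReal :=
  sInf {x : EReal | ∃ μ : ℝ, x = (μ : EReal) ∧
    ∀ᶠ q : ℕ in atTop, ∀ p : ℤ, |ξ - (p : ℝ) / (q : ℝ)| > 1 / (q : ℝ) ^ μ}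

/-- `α_ξ(u)`: the limsup of `|u_{n+1} ξ - v_{n+1}| / |u_n ξ - v_n|`, where `v_n` is the
nearest integer to `u_n ξ`, computed in the extended reals. -/
noncomputable def alphaExp (ξ : ℝ) (u : ℕ → ℕ) : EReal :=
  limsup (fun n =>
    ((|(u (n + 1) : ℝ) * ξ - (round ((u (n + 1) : ℝ) * ξ) : ℝ)| /
      |(u n : ℝ) * ξ - (round ((u n : ℝ) * ξ) : ℝ)| : ℝ) : EReal)) atTop

/-- `β(u)`: the limsup of `u_{n+1} / u_n`, computed in the extended reals. -/
noncomputable def betaExp (u : ℕ → ℕ) : EReal :=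
  limsup (fun n => (((u (n + 1) : ℝ) / (u n : ℝ) : ℝ) : EReal)) atTop

/-- The density exponent `ν(ξ)`: the infimum of `log √(α_ξ(u) β(u))` over all
non-decreasing sequences `u` of positive integers with `α_ξ(u) < 1` and `β(u) < +∞`
(`⊤` if there is no such sequence). -/
noncomputable def densityExponent (ξ : ℝ) : EReal :=
  sInf {x : EReal | ∃ u : ℕ → ℕ, Monotone u ∧ (∀ n, 0 < u n) ∧
    alphaExp ξ u < 1 ∧ betaExp u < ⊤ ∧
    x = ((Real.log (Real.sqrt ((alphaExp ξ u).toReal * (betaExp u).toReal)) : ℝ) : EReal)}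

noncomputable def nd (ξ : ℝ) (m : ℕ) : ℝ := |(m : ℝ) * ξ - (round ((m : ℝ) * ξ) : ℝ)|

lemma nd_eq_of {ξ : ℝ} {m : ℕ} {w : ℤ} (h : |(m : ℝ) * ξ - w| < 1/2) :
    nd ξ m = |(m : ℝ) * ξ - w| := by
  have : round ((m : ℝ) * ξ) = w := by
    rw [round_eq, Int.floor_eq_iff]
    rw [abs_lt] at h
    constructor <;> push_cast <;> linarith
  rw [nd, this]

lemma walk {s : ℝ} (hs : 0 < s) (x t : ℝ) :
    ∃ (n : ℕ) (w : ℤ), (n : ℝ) * s ≤ 1 + s ∧ t ≤ x + n * s - w ∧ x + n * s - w < t + s := by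
  set w : ℤ := ⌈x - t⌉ with hw
  have hd0 : 0 ≤ (w : ℝ) + t - x := by
    have := Int.le_ceil (x - t); linarith
  have hd1 : (w : ℝ) + t - x < 1 := by
    have := Int.ceil_lt_add_one (x - t); linarith
  set d := (w : ℝ) + t - x with hdd
  set n : ℕ := ⌈d / s⌉₊ with hn
  have h1 : d ≤ (n : ℝ) * s := by
    have := Nat.le_ceil (d / s)
    calc d = d / s * s := by field_simp
    _ ≤ (n : ℝ) * s := by apply mul_le_mul_of_nonneg_right this hs.le
  have h2 : (n : ℝ) * s < d + s := by
    have h3 : (n : ℝ) < d / s + 1 := Nat.ceil_lt_add_one (div_nonneg hd0 hs.le)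
    calc (n : ℝ) * s < (d / s + 1) * s := mul_lt_mul_of_pos_right h3 hs
    _ = d + s := by field_simp
  exact ⟨n, w, by nlinarith, by linarith, by linarith⟩

lemma rpow_neg_anti {a b e : ℝ} (ha : 0 < a) (hab : a ≤ b) (he : 0 ≤ e) : b ^ (-e) ≤ a ^ (-e) := by
  rw [Real.rpow_neg (by linarith), Real.rpow_neg ha.le]
  exact inv_anti₀ (Real.rpow_pos_of_pos ha e) (Real.rpow_le_rpow ha.le hab he)

lemma hit {ξ : ℝ} (hξ : Irrational ξ) {c ν : ℝ} (hc : 0 < c) (hc1 : c ≤ 1) (hν : 1 ≤ ν)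
    (hlow : ∀ m : ℕ, 0 < m → c * (m : ℝ) ^ (-ν) ≤ nd ξ m)
    {N : ℕ} (hN : 0 < N) (m₀ : ℕ) {t : ℝ} (ht : 0 ≤ t) (ht2 : t + 1 / N < 1 / 2) :
    ∃ m : ℕ, m₀ < m ∧ ((m : ℝ) ≤ (m₀ : ℝ) + 3 * (N : ℝ) ^ (1 + ν) / c) ∧
      t ≤ nd ξ m ∧ nd ξ m ≤ t + 1 / N := by
  obtain ⟨k, hk0, hkN, hk⟩ := Real.exists_nat_abs_mul_sub_round_le ξ hN
  set j : ℤ := round ((k : ℝ) * ξ) with hj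
  set s : ℝ := (k : ℝ) * ξ - j with hs
  have hNpos : (0 : ℝ) < N := Nat.cast_pos.2 hN
  have hkpos : (0 : ℝ) < k := Nat.cast_pos.2 hk0
  have hkN' : (k : ℝ) ≤ N := Nat.cast_le.2 hkN
  have hs0 : s ≠ 0 := sub_ne_zero.2 ((hξ.natCast_mul hk0.ne').ne_int j)
  clear_value j
  clear_value s
  have hσpos : 0 < |s| := abs_pos.2 hs0
  have hnd : nd ξ k = |s| := by rw [nd, ← hj, ← hs]
  have hσlow : c * (N : ℝ) ^ (-ν) ≤ |s| := by
    rw [← hnd]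
    refine le_trans ?_ (hlow k hk0)
    exact mul_le_mul_of_nonneg_left (rpow_neg_anti hkpos hkN' (by linarith)) hc.le
  have hσhi' : |s| ≤ 1 / N := by
    refine le_trans hk ?_
    apply div_le_div_of_nonneg_left (by norm_num) hNpos (by linarith)
  -- bound on 1/|s|
  have hNν : (0 : ℝ) < (N : ℝ) ^ ν := Real.rpow_pos_of_pos hNpos ν
  have hinv : 1 / |s| ≤ (N : ℝ) ^ ν / c := by
    rw [div_le_div_iff₀ hσpos hc]
    have : c * ((N : ℝ) ^ ν)⁻¹ ≤ |s| := by
      rwa [Real.rpow_neg hNpos.le] at hσlow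
    calc (1 : ℝ) * c = ((N : ℝ) ^ ν * ((N : ℝ) ^ ν)⁻¹) * c := by
          rw [mul_inv_cancel₀ hNν.ne']
    _ = (N : ℝ) ^ ν * (c * ((N : ℝ) ^ ν)⁻¹) := by ring
    _ ≤ (N : ℝ) ^ ν * |s| := mul_le_mul_of_nonneg_left this hNν.le
  -- window bound ingredient: for any n with n*|s| ≤ 1 + |s|
  have hwin : ∀ n : ℕ, (n : ℝ) * |s| ≤ 1 + |s| →
      ((m₀ + k + n * k : ℕ) : ℝ) ≤ (m₀ : ℝ) + 3 * (N : ℝ) ^ (1 + ν) / c := by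
    intro n hn
    have hn' : (n : ℝ) ≤ 1 / |s| + 1 := by
      rw [div_add' _ _ _ hσpos.ne']
      rw [le_div_iff₀ hσpos]
      linarith
    have hNN : (N : ℝ) * ((N : ℝ) ^ ν / c) = (N : ℝ) ^ (1 + ν) / c := by
      rw [Real.rpow_add hNpos, Real.rpow_one]; ring
    have hN1ν : (N : ℝ) ≤ (N : ℝ) ^ (1 + ν) / c := by
      have h1 : (N : ℝ) = (N : ℝ) ^ (1 : ℝ) := (Real.rpow_one _).symm
      have h2 : (N : ℝ) ^ (1 : ℝ) ≤ (N : ℝ) ^ (1 + ν) :=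
        Real.rpow_le_rpow_of_exponent_le (by exact_mod_cast hN) (by linarith)
      have h2' : (N : ℝ) ≤ (N : ℝ) ^ (1 + ν) := by
        calc (N : ℝ) = (N : ℝ) ^ (1 : ℝ) := (Real.rpow_one _).symm
        _ ≤ (N : ℝ) ^ (1 + ν) := h2
      have h3 : (N : ℝ) ^ (1 + ν) * c ≤ (N : ℝ) ^ (1 + ν) * 1 :=
        mul_le_mul_of_nonneg_left hc1 (Real.rpow_pos_of_pos hNpos (1 + ν)).le
      rw [le_div_iff₀ hc]
      calc (N : ℝ) * c ≤ (N : ℝ) * 1 := mul_le_mul_of_nonneg_left hc1 hNpos.le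
      _ = (N : ℝ) := mul_one _
      _ ≤ (N : ℝ) ^ (1 + ν) := h2'
    push_cast
    have : (k : ℝ) * (n + 1) ≤ (N : ℝ) * (1 / |s| + 2) := by
      apply mul_le_mul hkN' (by linarith) (by positivity) hNpos.le
    have h4 : (N : ℝ) * (1 / |s| + 2) ≤ (N : ℝ) * ((N : ℝ) ^ ν / c) + 2 * N := by
      have := mul_le_mul_of_nonneg_left hinv hNpos.le
      ring_nf
      ring_nf at this
      linarith
    have h5 : (N : ℝ) * (1 / |s| + 2) ≤ 3 * ((N : ℝ) ^ (1 + ν) / c) := by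
      rw [hNN] at h4; linarith
    have h6 : (k : ℝ) + (n : ℝ) * k = (k : ℝ) * ((n : ℝ) + 1) := by ring
    have h7 : 3 * ((N : ℝ) ^ (1 + ν) / c) = 3 * (N : ℝ) ^ (1 + ν) / c := by ring
    linarith
  rcases lt_or_gt_of_ne hs0 with hneg | hpos
  · -- s < 0
    obtain ⟨n, w, hn1, hn2, hn3⟩ := walk (neg_pos.2 hneg) (-(((m₀ + k : ℕ) : ℝ) * ξ)) t
    refine ⟨m₀ + k + n * k, by omega, ?_, ?_⟩
    · apply hwin n; rwa [abs_of_neg hneg]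
    · have hval : ((m₀ + k + n * k : ℕ) : ℝ) * ξ - ((n : ℤ) * j - w : ℤ) =
          -((-(((m₀ + k : ℕ) : ℝ) * ξ)) + n * (-s) - w) := by
        have hjs : (k : ℝ) * ξ = (j : ℝ) + s := by rw [hs]; ring
        push_cast
        linear_combination (n : ℝ) * hjs
      have habs : |((m₀ + k + n * k : ℕ) : ℝ) * ξ - ((n : ℤ) * j - w : ℤ)| =
          (-(((m₀ + k : ℕ) : ℝ) * ξ)) + n * (-s) - w := by
        rw [hval, abs_neg, abs_of_nonneg (by linarith)]
      have hlt : |((m₀ + k + n * k : ℕ) : ℝ) * ξ - ((n : ℤ) * j - w : ℤ)| < 1 / 2 := by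
        rw [habs]
        have : -s ≤ 1 / N := by rw [← abs_of_neg hneg]; exact hσhi'
        linarith
      rw [nd_eq_of hlt, habs]
      have : -s ≤ 1 / N := by rw [← abs_of_neg hneg]; exact hσhi'
      constructor <;> linarith
  · -- s > 0
    obtain ⟨n, w, hn1, hn2, hn3⟩ := walk hpos (((m₀ + k : ℕ) : ℝ) * ξ) t
    refine ⟨m₀ + k + n * k, by omega, ?_, ?_⟩
    · apply hwin n; rwa [abs_of_pos hpos]
    · have hval : ((m₀ + k + n * k : ℕ) : ℝ) * ξ - (w + (n : ℤ) * j : ℤ) =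
          (((m₀ + k : ℕ) : ℝ) * ξ) + n * s - w := by
        have hjs : (k : ℝ) * ξ = (j : ℝ) + s := by rw [hs]; ring
        push_cast
        linear_combination (n : ℝ) * hjs
      have habs : |((m₀ + k + n * k : ℕ) : ℝ) * ξ - (w + (n : ℤ) * j : ℤ)| =
          (((m₀ + k : ℕ) : ℝ) * ξ) + n * s - w := by
        rw [hval, abs_of_nonneg (by linarith)]
      have hlt : |((m₀ + k + n * k : ℕ) : ℝ) * ξ - (w + (n : ℤ) * j : ℤ)| < 1 / 2 := by
        rw [habs]
        have : s ≤ 1 / N := by rw [← abs_of_pos hpos]; exact hσhi'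
        linarith
      rw [nd_eq_of hlt, habs]
      have : s ≤ 1 / N := by rw [← abs_of_pos hpos]; exact hσhi'
      constructor <;> linarith


lemma nd_pos {ξ : ℝ} (hξ : Irrational ξ) {m : ℕ} (hm : 0 < m) : 0 < nd ξ m := by
  have h : Irrational ((m : ℝ) * ξ) := hξ.natCast_mul hm.ne'
  exact abs_pos.2 (sub_ne_zero.2 (h.ne_int (round ((m : ℝ) * ξ))))

lemma exists_lower {ξ : ℝ} (hξ : Irrational ξ) (h : irrationalityExponent ξ < ⊤) :
    ∃ ν c : ℝ, 1 ≤ ν ∧ 0 < c ∧ c ≤ 1 ∧ ∀ m : ℕ, 0 < m → c * (m : ℝ) ^ (-ν) ≤ nd ξ m := by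
  obtain ⟨x, hxS, -⟩ := sInf_lt_iff.mp h
  obtain ⟨μ, rfl, hev⟩ := hxS
  obtain ⟨Q, hQ⟩ := eventually_atTop.mp hev
  set M := max Q 1 with hM
  set ν := max (μ - 1) 1 with hν
  have hν1 : 1 ≤ ν := le_max_right _ _
  have hbig : ∀ m : ℕ, M ≤ m → (m : ℝ) ^ (-ν) ≤ nd ξ m := by
    intro m hm
    have hm1 : 1 ≤ m := le_trans (le_max_right Q 1) hm
    have hmpos : (0 : ℝ) < m := by exact_mod_cast hm1
    have hm1' : (1 : ℝ) ≤ m := by exact_mod_cast hm1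
    have h1 := hQ m (le_trans (le_max_left Q 1) hm) (round ((m : ℝ) * ξ))
    have h2 : nd ξ m = (m : ℝ) * |ξ - (round ((m : ℝ) * ξ) : ℝ) / (m : ℝ)| := by
      rw [nd, ← abs_of_pos hmpos, ← abs_mul]
      congr 1
      field_simp
      rw [abs_of_pos hmpos]
      ring
    have h3 : (m : ℝ) * (1 / (m : ℝ) ^ μ) = (m : ℝ) ^ (1 - μ) := by
      rw [Real.rpow_sub hmpos, Real.rpow_one]
      ring
    have h4 : (m : ℝ) ^ (-ν) ≤ (m : ℝ) ^ (1 - μ) := by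
      apply Real.rpow_le_rpow_of_exponent_le hm1'
      have := le_max_left (μ - 1) 1
      rw [hν]
      simp only [neg_le, neg_sub]
      linarith [le_max_left (μ - 1) 1]
    have h5 : (m : ℝ) * (1 / (m : ℝ) ^ μ) ≤ (m : ℝ) * |ξ - (round ((m : ℝ) * ξ) : ℝ) / (m : ℝ)| :=
      mul_le_mul_of_nonneg_left h1.le hmpos.le
    rw [h2]
    calc (m : ℝ) ^ (-ν) ≤ (m : ℝ) ^ (1 - μ) := h4
    _ = (m : ℝ) * (1 / (m : ℝ) ^ μ) := h3.symm
    _ ≤ _ := h5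
  obtain ⟨c0, hc0pos, hc0⟩ : ∃ c0 : ℝ, 0 < c0 ∧ ∀ m : ℕ, 0 < m → m < M → c0 ≤ nd ξ m := by
    rcases Finset.eq_empty_or_nonempty ((Finset.Ico 1 M).image (nd ξ)) with he | hne
    · exact ⟨1, one_pos, fun m hm hmM => absurd (Finset.mem_image_of_mem (nd ξ)
        (Finset.mem_Ico.2 ⟨hm, hmM⟩)) (by simp [he])⟩
    · refine ⟨((Finset.Ico 1 M).image (nd ξ)).min' hne, ?_, ?_⟩
      · obtain ⟨y, hy, hyeq⟩ := Finset.mem_image.1 (Finset.min'_mem _ hne)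
        rw [← hyeq]
        exact nd_pos hξ (Finset.mem_Ico.1 hy).1
      · intro m hm hmM
        exact Finset.min'_le _ _ (Finset.mem_image_of_mem (nd ξ) (Finset.mem_Ico.2 ⟨hm, hmM⟩))
  refine ⟨ν, min c0 1, hν1, lt_min hc0pos one_pos, min_le_right _ _, ?_⟩
  intro m hm
  have hm1' : (1 : ℝ) ≤ m := by exact_mod_cast hm
  have hrnn : (0 : ℝ) ≤ (m : ℝ) ^ (-ν) := Real.rpow_nonneg (by positivity) _
  rcases le_or_gt M m with hM' | hM'
  · calc min c0 1 * (m : ℝ) ^ (-ν) ≤ 1 * (m : ℝ) ^ (-ν) :=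
        mul_le_mul_of_nonneg_right (min_le_right _ _) hrnn
    _ = (m : ℝ) ^ (-ν) := one_mul _
    _ ≤ nd ξ m := hbig m hM'
  · have hr1 : (m : ℝ) ^ (-ν) ≤ 1 :=
      Real.rpow_le_one_of_one_le_of_nonpos hm1' (by linarith)
    calc min c0 1 * (m : ℝ) ^ (-ν) ≤ min c0 1 * 1 :=
        mul_le_mul_of_nonneg_left hr1 (le_of_lt (lt_min hc0pos one_pos))
    _ = min c0 1 := mul_one _
    _ ≤ c0 := min_le_left _ _
    _ ≤ nd ξ m := hc0 m hm hM'

lemma alphaExp_eq (ξ : ℝ) (u : ℕ → ℕ) :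
    alphaExp ξ u = limsup (fun n => ((nd ξ (u (n + 1)) / nd ξ (u n) : ℝ) : EReal)) atTop := rfl

lemma alphaExp_nonneg (ξ : ℝ) (u : ℕ → ℕ) : (0 : EReal) ≤ alphaExp ξ u := by
  rw [alphaExp_eq]
  refine le_limsup_of_frequently_le (Frequently.of_forall fun n => ?_) (by isBoundedDefault)
  exact EReal.coe_nonneg.2 (div_nonneg (abs_nonneg _) (abs_nonneg _))

lemma betaExp_ge_one {u : ℕ → ℕ} (hmono : Monotone u) (hpos : ∀ n, 0 < u n) :
    (1 : EReal) ≤ betaExp u := by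
  refine le_limsup_of_frequently_le (Frequently.of_forall fun n => ?_) (by isBoundedDefault)
  have h1 : (1 : ℝ) ≤ (u (n + 1) : ℝ) / (u n : ℝ) := by
    rw [le_div_iff₀ (by exact_mod_cast hpos n)]
    rw [one_mul]
    exact_mod_cast hmono (Nat.le_succ n)
  exact_mod_cast EReal.coe_le_coe_iff.2 h1


lemma one_le_prod {ξ : ℝ} (hξ : Irrational ξ) {u : ℕ → ℕ} (hmono : Monotone u)
    (hpos : ∀ n, 0 < u n) (hα : alphaExp ξ u < 1) (hβ : betaExp u < ⊤) :
    1 ≤ (alphaExp ξ u).toReal * (betaExp u).toReal := by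
  have hθpos : ∀ n, 0 < nd ξ (u n) := fun n => nd_pos hξ (hpos n)
  have hupos : ∀ n, (0 : ℝ) < (u n : ℝ) := fun n => by exact_mod_cast hpos n
  have hα0 : (0 : EReal) ≤ alphaExp ξ u := alphaExp_nonneg ξ u
  have hβ1 : (1 : EReal) ≤ betaExp u := betaExp_ge_one hmono hpos
  have hαbot : alphaExp ξ u ≠ ⊥ :=
    (lt_of_lt_of_le (by simpa using EReal.bot_lt_coe 0) hα0).ne'
  have hβbot : betaExp u ≠ ⊥ :=
    (lt_of_lt_of_le (by simpa using EReal.bot_lt_coe 1) hβ1).ne'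
  have hane : (((alphaExp ξ u).toReal : ℝ) : EReal) = alphaExp ξ u :=
    EReal.coe_toReal (hα.trans_le le_top).ne hαbot
  have hbne : (((betaExp u).toReal : ℝ) : EReal) = betaExp u :=
    EReal.coe_toReal hβ.ne hβbot
  obtain ⟨a, ha⟩ : ∃ a : ℝ, (alphaExp ξ u).toReal = a := ⟨_, rfl⟩
  obtain ⟨b, hb⟩ : ∃ b : ℝ, (betaExp u).toReal = b := ⟨_, rfl⟩
  rw [ha] at hane ⊢
  rw [hb] at hbne ⊢
  have ha1 : a < 1 := by rw [← hane] at hα; exact_mod_cast hα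
  have ha0 : 0 ≤ a := by rw [← hane] at hα0; exact_mod_cast hα0
  have hb1 : 1 ≤ b := by rw [← hbne] at hβ1; exact_mod_cast hβ1
  by_contra hab
  push_neg at hab
  -- find a' > a, b' > b with a' * b' < 1
  obtain ⟨a', b', haa', hbb', ha'0, hb'0, ha'1, ha'b'⟩ :
      ∃ a' b' : ℝ, a < a' ∧ b < b' ∧ 0 < a' ∧ 0 < b' ∧ a' < 1 ∧ a' * b' < 1 := by
    refine ⟨a + (1 - a * b) / (a + b + 2), b + (1 - a * b) / (a + b + 2), ?_, ?_, ?_, ?_, ?_, ?_⟩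
    · have : 0 < (1 - a * b) / (a + b + 2) := div_pos (by linarith) (by linarith)
      linarith
    · have : 0 < (1 - a * b) / (a + b + 2) := div_pos (by linarith) (by linarith)
      linarith
    · have : 0 < (1 - a * b) / (a + b + 2) := div_pos (by linarith) (by linarith)
      linarith
    · have : 0 < (1 - a * b) / (a + b + 2) := div_pos (by linarith) (by linarith)
      linarith
    all_goals {
      have hsum : (0:ℝ) < a + b + 2 := by linarith
      have hε₁pos : 0 < (1 - a * b) / (a + b + 2) := div_pos (by linarith) hsum
      have hεid : (1 - a * b) / (a + b + 2) * (a + b + 2) = 1 - a * b :=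
        div_mul_cancel₀ _ hsum.ne'
      have hεhalf : (1 - a * b) / (a + b + 2) ≤ 1 / 2 := by
        rw [div_le_iff₀ hsum]
        have hab0 : 0 ≤ a * b := mul_nonneg ha0 (by linarith)
        linarith
      have hprod : (a + (1 - a * b) / (a + b + 2)) * (b + (1 - a * b) / (a + b + 2)) < 1 := by
        nlinarith [mul_pos hε₁pos (by linarith : (0:ℝ) < 2 - (1 - a * b) / (a + b + 2))]
      first
      | exact hprod
      | nlinarith [hprod, mul_nonneg (by linarith : (0:ℝ) ≤ a + (1 - a * b) / (a + b + 2))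
          (by linarith : (0:ℝ) ≤ b + (1 - a * b) / (a + b + 2) - 1)]
    }
  have heva : ∀ᶠ n in atTop, nd ξ (u (n + 1)) / nd ξ (u n) < a' := by
    have h1 : alphaExp ξ u < ((a' : ℝ) : EReal) := by
      rw [← hane]; exact_mod_cast EReal.coe_lt_coe_iff.2 haa'
    rw [alphaExp_eq] at h1
    filter_upwards [eventually_lt_of_limsup_lt h1] with n hn
    exact_mod_cast hn
  have hevb : ∀ᶠ n in atTop, (u (n + 1) : ℝ) / (u n : ℝ) < b' := by
    have h1 : betaExp u < ((b' : ℝ) : EReal) := by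
      rw [← hbne]; exact_mod_cast EReal.coe_lt_coe_iff.2 hbb'
    filter_upwards [eventually_lt_of_limsup_lt h1] with n hn
    exact_mod_cast hn
  obtain ⟨N, hN⟩ := eventually_atTop.mp (heva.and hevb)
  have hstep : ∀ n, N ≤ n → nd ξ (u (n + 1)) < a' * nd ξ (u n) ∧
      (u (n + 1) : ℝ) < b' * (u n : ℝ) := by
    intro n hn
    obtain ⟨h1, h2⟩ := hN n hn
    exact ⟨(div_lt_iff₀ (hθpos n)).1 h1, (div_lt_iff₀ (hupos n)).1 h2⟩
  have hlb : ∀ n, N ≤ n → 1 / (a' + b') ≤ (u n : ℝ) * nd ξ (u n) := by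
    intro n hn
    have hvdef : ∀ k : ℕ, nd ξ (u k) = |(u k : ℝ) * ξ - (round ((u k : ℝ) * ξ) : ℝ)| :=
      fun k => rfl
    have hne2 : round ((u (n+1) : ℝ) * ξ) * (u n : ℤ) ≠ round ((u n : ℝ) * ξ) * (u (n+1) : ℤ) := by
      intro heq
      have heqr : ((round ((u (n+1) : ℝ) * ξ) : ℝ)) * (u n : ℝ) =
          ((round ((u n : ℝ) * ξ) : ℝ)) * (u (n+1) : ℝ) := by exact_mod_cast heq
      have hkey : (u n : ℝ) * ((u (n + 1) : ℝ) * ξ - (round ((u (n+1) : ℝ) * ξ) : ℝ)) =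
          (u (n + 1) : ℝ) * ((u n : ℝ) * ξ - (round ((u n : ℝ) * ξ) : ℝ)) := by
        linear_combination -heqr
      have habs2 : (u n : ℝ) * nd ξ (u (n + 1)) = (u (n + 1) : ℝ) * nd ξ (u n) := by
        have h := congrArg abs hkey
        rwa [abs_mul, abs_mul, abs_of_pos (hupos n), abs_of_pos (hupos (n + 1)),
          ← hvdef, ← hvdef] at h
      have hmono' : (u n : ℝ) ≤ (u (n + 1) : ℝ) := by exact_mod_cast hmono (Nat.le_succ n)
      have hge : nd ξ (u n) ≤ nd ξ (u (n + 1)) := by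
        rw [← mul_le_mul_iff_right₀ (hupos n), habs2]
        exact mul_le_mul_of_nonneg_right hmono' (hθpos n).le
      have h2 := (hstep n hn).1
      nlinarith [hθpos n]
    have hint : (1 : ℝ) ≤ |((round ((u (n+1) : ℝ) * ξ) * (u n : ℤ) -
        round ((u n : ℝ) * ξ) * (u (n+1) : ℤ) : ℤ) : ℝ)| := by
      exact_mod_cast Int.one_le_abs (sub_ne_zero.2 hne2)
    have htri : |((round ((u (n+1) : ℝ) * ξ) * (u n : ℤ) -
        round ((u n : ℝ) * ξ) * (u (n+1) : ℤ) : ℤ) : ℝ)| ≤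
        (u n : ℝ) * nd ξ (u (n + 1)) + (u (n + 1) : ℝ) * nd ξ (u n) := by
      have hid : ((round ((u (n+1) : ℝ) * ξ) * (u n : ℤ) -
          round ((u n : ℝ) * ξ) * (u (n+1) : ℤ) : ℤ) : ℝ) =
          ((u (n + 1) : ℝ) * ((u n : ℝ) * ξ - (round ((u n : ℝ) * ξ) : ℝ))) -
          ((u n : ℝ) * ((u (n + 1) : ℝ) * ξ - (round ((u (n+1) : ℝ) * ξ) : ℝ))) := by
        push_cast
        ring
      rw [hid]
      refine le_trans (abs_sub _ _) ?_
      rw [abs_mul, abs_mul, abs_of_pos (hupos n), abs_of_pos (hupos (n + 1)),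
        ← hvdef, ← hvdef]
      linarith
    obtain ⟨h1, h2⟩ := hstep n hn
    have hc1 : (u n : ℝ) * nd ξ (u (n + 1)) ≤ (u n : ℝ) * (a' * nd ξ (u n)) :=
      mul_le_mul_of_nonneg_left h1.le (hupos n).le
    have hc2 : (u (n + 1) : ℝ) * nd ξ (u n) ≤ (b' * (u n : ℝ)) * nd ξ (u n) :=
      mul_le_mul_of_nonneg_right h2.le (hθpos n).le
    rw [div_le_iff₀ (by linarith : (0:ℝ) < a' + b')]
    nlinarith
  have hdec : ∀ k : ℕ, (u (N + k) : ℝ) * nd ξ (u (N + k)) ≤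
      (a' * b') ^ k * ((u N : ℝ) * nd ξ (u N)) := by
    intro k
    induction k with
    | zero => simp
    | succ k ih =>
      obtain ⟨h1, h2⟩ := hstep (N + k) (Nat.le_add_right _ _)
      have hstep2 : (u (N + k + 1) : ℝ) * nd ξ (u (N + k + 1)) ≤
          (a' * b') * ((u (N + k) : ℝ) * nd ξ (u (N + k))) := by
        have hmm := mul_le_mul h2.le h1.le (hθpos _).le (mul_nonneg hb'0.le (hupos _).le)
        nlinarith
      have hee : N + (k + 1) = N + k + 1 := rfl
      calc (u (N + (k + 1)) : ℝ) * nd ξ (u (N + (k + 1)))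
          = (u (N + k + 1) : ℝ) * nd ξ (u (N + k + 1)) := by rw [hee]
      _ ≤ (a' * b') * ((u (N + k) : ℝ) * nd ξ (u (N + k))) := hstep2
      _ ≤ (a' * b') * ((a' * b') ^ k * ((u N : ℝ) * nd ξ (u N))) :=
          mul_le_mul_of_nonneg_left ih (mul_nonneg ha'0.le hb'0.le)
      _ = (a' * b') ^ (k + 1) * ((u N : ℝ) * nd ξ (u N)) := by ring
  have htend : Tendsto (fun k : ℕ => (a' * b') ^ k * ((u N : ℝ) * nd ξ (u N))) atTop (nhds 0) := by
    have h0 : (0:ℝ) ≤ a' * b' := mul_nonneg ha'0.le hb'0.le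
    simpa using (tendsto_pow_atTop_nhds_zero_of_lt_one h0 ha'b').mul_const
      ((u N : ℝ) * nd ξ (u N))
  have hev2 := htend.eventually (eventually_lt_nhds
    (by positivity : (0:ℝ) < 1 / (a' + b')))
  obtain ⟨k, hk⟩ := hev2.exists
  have hfin := hlb (N + k) (Nat.le_add_right _ _)
  linarith [hdec k]

lemma exists_good {ξ : ℝ} (hξ : Irrational ξ) {ν c : ℝ} (hν : 1 ≤ ν) (hc : 0 < c) (hc1 : c ≤ 1)
    (hlow : ∀ m : ℕ, 0 < m → c * (m : ℝ) ^ (-ν) ≤ nd ξ m)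
    {δ : ℝ} (hδ0 : 0 < δ) (hδ1 : δ ≤ 1 / 2) :
    ∃ u : ℕ → ℕ, Monotone u ∧ (∀ n, 0 < u n) ∧ alphaExp ξ u < 1 ∧ betaExp u < ⊤ ∧
      (alphaExp ξ u).toReal * (betaExp u).toReal ≤ 1 + δ := by
  have hP0 : (0:ℝ) < 1 + ν := by linarith
  obtain ⟨κ, hκdef⟩ : ∃ κ : ℝ, κ = 1 / (2 * (1 + ν)) := ⟨_, rfl⟩
  have hκ0 : 0 < κ := by rw [hκdef]; positivity
  have hκP : 2 * κ * (1 + ν) = 1 := by rw [hκdef]; field_simp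
  have hbase : (1:ℝ) < 1 + δ / 2 := by linarith
  -- the validity predicate
  obtain ⟨NN, hNN⟩ : ∃ NN : ℕ → ℕ, ∀ q, NN q = ⌊(c * δ * (q:ℝ) / 12) ^ (1 / (1 + ν))⌋₊ :=
    ⟨_, fun q => rfl⟩
  obtain ⟨V, hV⟩ : ∃ V : ℕ → Prop, ∀ q, V q ↔ (1 ≤ q ∧ 0 < NN q ∧
      ((q:ℝ) ^ (-κ) + 1 / (NN q : ℝ) < 1 / 2) ∧ ((1:ℝ) ≤ δ * q / 4) ∧
      ((q:ℝ) ^ (-κ) + 1 / (NN q : ℝ) ≤ (1 + δ / 2) ^ (κ / 2) * (q:ℝ) ^ (-κ))) :=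
    ⟨_, fun q => Iff.rfl⟩
  -- step existence
  have hstepex : ∀ q : ℕ, V q → ∃ m : ℕ, ((1 + δ / 2) * (q:ℝ) < m) ∧
      ((m:ℝ) ≤ (1 + δ) * q) ∧ ((q:ℝ) ^ (-κ) ≤ nd ξ m) ∧
      nd ξ m ≤ (1 + δ / 2) ^ (κ / 2) * (q:ℝ) ^ (-κ) := by
    intro q hq
    rw [hV] at hq
    obtain ⟨hq1, hN0, hC2, hC3, hC5⟩ := hq
    have hq1' : (1:ℝ) ≤ q := by exact_mod_cast hq1
    have hqpos : (0:ℝ) < q := by linarith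
    have ht0 : (0:ℝ) ≤ (q:ℝ) ^ (-κ) := Real.rpow_nonneg hqpos.le _
    obtain ⟨m, hm1, hm2, hm3, hm4⟩ := hit hξ hc hc1 hν hlow hN0
      (q + ⌈δ * (q:ℝ) / 2⌉₊) ht0 hC2
    refine ⟨m, ?_, ?_, hm3, le_trans hm4 hC5⟩
    · have h1 : δ * (q:ℝ) / 2 ≤ (⌈δ * (q:ℝ) / 2⌉₊ : ℝ) := Nat.le_ceil _
      have h2 : ((q + ⌈δ * (q:ℝ) / 2⌉₊ : ℕ) : ℝ) < m := by
        exact_mod_cast hm1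
      push_cast at h2
      linarith
    · -- upper bound
      have h1 : (⌈δ * (q:ℝ) / 2⌉₊ : ℝ) < δ * (q:ℝ) / 2 + 1 :=
        Nat.ceil_lt_add_one (by positivity)
      have hNle : (NN q : ℝ) ≤ (c * δ * (q:ℝ) / 12) ^ (1 / (1 + ν)) := by
        rw [hNN]
        exact Nat.floor_le (Real.rpow_nonneg (by positivity) _)
      have hNP : (NN q : ℝ) ^ (1 + ν) ≤ c * δ * (q:ℝ) / 12 := by
        have h2 : (NN q : ℝ) ^ (1 + ν) ≤ ((c * δ * (q:ℝ) / 12) ^ (1 / (1 + ν))) ^ (1 + ν) :=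
          Real.rpow_le_rpow (Nat.cast_nonneg _) hNle hP0.le
        have h3 : ((c * δ * (q:ℝ) / 12) ^ (1 / (1 + ν))) ^ (1 + ν) = c * δ * (q:ℝ) / 12 := by
          rw [← Real.rpow_mul (by positivity)]
          rw [one_div, inv_mul_cancel₀ hP0.ne', Real.rpow_one]
        rw [h3] at h2
        exact h2
      have hwin : 3 * (NN q : ℝ) ^ (1 + ν) / c ≤ δ * (q:ℝ) / 4 := by
        rw [div_le_iff₀ hc]
        nlinarith
      have h2 : ((q + ⌈δ * (q:ℝ) / 2⌉₊ : ℕ) : ℝ) ≤ (q:ℝ) + δ * (q:ℝ) / 2 + 1 := by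
        push_cast
        linarith
      calc (m:ℝ) ≤ ((q + ⌈δ * (q:ℝ) / 2⌉₊ : ℕ) : ℝ) + 3 * (NN q : ℝ) ^ (1 + ν) / c := hm2
      _ ≤ (q:ℝ) + δ * (q:ℝ) / 2 + 1 + δ * (q:ℝ) / 4 := by linarith
      _ ≤ (1 + δ) * q := by linarith
  -- validity holds eventually
  have hvalid : ∀ᶠ q : ℕ in atTop, V q := by
    have hxt : Tendsto (fun q : ℕ => (c * δ * (q:ℝ) / 12) ^ (1 / (1 + ν))) atTop atTop := by
      apply (tendsto_rpow_atTop (by positivity : (0:ℝ) < 1 / (1 + ν))).comp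
      have h1 : Tendsto (fun q : ℕ => (q : ℝ)) atTop atTop := tendsto_natCast_atTop_atTop
      have h2 : Tendsto (fun x : ℝ => c * δ * x / 12) atTop atTop := by
        apply Tendsto.atTop_div_const (by norm_num)
        exact Tendsto.const_mul_atTop (by positivity) tendsto_id
      exact h2.comp h1
    have hNt : Tendsto (fun q : ℕ => NN q) atTop atTop := by
      have := (tendsto_nat_floor_atTop (α := ℝ)).comp hxt
      apply this.congr
      intro q
      simp [Function.comp, hNN]
    have hNt' : Tendsto (fun q : ℕ => (NN q : ℝ)) atTop atTop :=
      tendsto_natCast_atTop_atTop.comp hNt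
    have hinvN : Tendsto (fun q : ℕ => 1 / (NN q : ℝ)) atTop (nhds 0) := by
      simp only [one_div]; exact hNt'.inv_tendsto_atTop
    have hqκ : Tendsto (fun q : ℕ => (q:ℝ) ^ (-κ)) atTop (nhds 0) :=
      (tendsto_rpow_neg_atTop hκ0).comp tendsto_natCast_atTop_atTop
    have hη0 : 0 < (1 + δ / 2) ^ (κ / 2) - 1 := by
      have : (1:ℝ) < (1 + δ / 2) ^ (κ / 2) :=
        Real.one_lt_rpow_iff_of_pos (by linarith) |>.2 (Or.inl ⟨hbase, by positivity⟩)
      linarith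
    -- C5 quantitative
    have hC5ev : ∀ᶠ q : ℕ in atTop,
        (q:ℝ) ^ (-κ) + 1 / (NN q : ℝ) ≤ (1 + δ / 2) ^ (κ / 2) * (q:ℝ) ^ (-κ) := by
      have hbig2 : ∀ᶠ q : ℕ in atTop, (2:ℝ) ≤ (c * δ * (q:ℝ) / 12) ^ (1 / (1 + ν)) :=
        hxt.eventually_ge_atTop 2
      have hsmall : ∀ᶠ q : ℕ in atTop,
          2 * (c * δ / 12) ^ (-(2 * κ)) * (q:ℝ) ^ (-κ) ≤ (1 + δ / 2) ^ (κ / 2) - 1 := by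
        have ht : Tendsto (fun q : ℕ => 2 * (c * δ / 12) ^ (-(2 * κ)) * (q:ℝ) ^ (-κ))
            atTop (nhds 0) := by
          simpa using (hqκ.const_mul (2 * (c * δ / 12) ^ (-(2 * κ))))
        exact ht.eventually (eventually_le_nhds hη0)
      have hqpos : ∀ᶠ q : ℕ in atTop, (0:ℝ) < q := by
        filter_upwards [eventually_ge_atTop 1] with q hq
        exact_mod_cast hq
      filter_upwards [hbig2, hsmall, hqpos] with q h2 hsm hqp
      have hx0 : (0:ℝ) ≤ c * δ * (q:ℝ) / 12 := by positivity
      have hfl : (c * δ * (q:ℝ) / 12) ^ (1 / (1 + ν)) - 1 < (NN q : ℝ) := by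
        rw [hNN]
        exact Nat.sub_one_lt_floor _
      have hNge : (c * δ * (q:ℝ) / 12) ^ (1 / (1 + ν)) / 2 ≤ (NN q : ℝ) := by linarith
      have hNpos : (0:ℝ) < (NN q : ℝ) := by
        have : (0:ℝ) < (c * δ * (q:ℝ) / 12) ^ (1 / (1 + ν)) / 2 := by linarith
        linarith
      have hinv : 1 / (NN q : ℝ) ≤ 2 / (c * δ * (q:ℝ) / 12) ^ (1 / (1 + ν)) := by
        rw [div_le_div_iff₀ hNpos (by linarith)]
        linarith
      -- rewrite the RHS
      have h12 : 1 / (1 + ν) = 2 * κ := by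
        rw [hκdef]; field_simp
      have hrw : 2 / (c * δ * (q:ℝ) / 12) ^ (1 / (1 + ν)) =
          2 * (c * δ / 12) ^ (-(2 * κ)) * (q:ℝ) ^ (-(2 * κ)) := by
        rw [h12]
        have hsplit : c * δ * (q:ℝ) / 12 = (c * δ / 12) * (q:ℝ) := by ring
        rw [hsplit, Real.mul_rpow (by positivity) hqp.le]
        rw [Real.rpow_neg (by positivity), Real.rpow_neg hqp.le]
        field_simp
      have hqq : (q:ℝ) ^ (-(2 * κ)) = (q:ℝ) ^ (-κ) * (q:ℝ) ^ (-κ) := by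
        rw [← Real.rpow_add hqp]
        ring_nf
      have hfinal : 1 / (NN q : ℝ) ≤ ((1 + δ / 2) ^ (κ / 2) - 1) * (q:ℝ) ^ (-κ) := by
        have hκq : (0:ℝ) ≤ (q:ℝ) ^ (-κ) := Real.rpow_nonneg hqp.le _
        have h3 : 2 * (c * δ / 12) ^ (-(2 * κ)) * (q:ℝ) ^ (-(2 * κ)) =
            (2 * (c * δ / 12) ^ (-(2 * κ)) * (q:ℝ) ^ (-κ)) * (q:ℝ) ^ (-κ) := by
          rw [hqq]; ring
        calc 1 / (NN q : ℝ) ≤ 2 / (c * δ * (q:ℝ) / 12) ^ (1 / (1 + ν)) := hinv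
        _ = (2 * (c * δ / 12) ^ (-(2 * κ)) * (q:ℝ) ^ (-κ)) * (q:ℝ) ^ (-κ) := by
            rw [hrw, h3]
        _ ≤ ((1 + δ / 2) ^ (κ / 2) - 1) * (q:ℝ) ^ (-κ) :=
            mul_le_mul_of_nonneg_right hsm hκq
      linarith
    have hC2ev : ∀ᶠ q : ℕ in atTop, (q:ℝ) ^ (-κ) + 1 / (NN q : ℝ) < 1 / 2 := by
      have hadd : Tendsto (fun q : ℕ => (q:ℝ) ^ (-κ) + 1 / (NN q : ℝ)) atTop (nhds 0) := by
        simpa using hqκ.add hinvN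
      exact hadd.eventually (eventually_lt_nhds (by norm_num : (0:ℝ) < 1/2))
    have hC3ev : ∀ᶠ q : ℕ in atTop, (1:ℝ) ≤ δ * q / 4 := by
      have ht : Tendsto (fun q : ℕ => δ * (q:ℝ) / 4) atTop atTop := by
        apply Tendsto.atTop_div_const (by norm_num)
        exact Tendsto.const_mul_atTop hδ0 tendsto_natCast_atTop_atTop
      exact ht.eventually_ge_atTop 1
    filter_upwards [eventually_ge_atTop 1, hNt.eventually_gt_atTop 0, hC2ev, hC3ev, hC5ev]
      with q h1 h2 h3 h4 h5
    rw [hV]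
    exact ⟨h1, h2, h3, h4, h5⟩
  obtain ⟨Q₀, hQ₀⟩ := eventually_atTop.mp hvalid
  classical
  obtain ⟨step, hstepdef⟩ : ∃ step : ℕ → ℕ, ∀ q, step q =
      if h : V q then (hstepex q h).choose else q + 1 := ⟨_, fun q => rfl⟩
  obtain ⟨u, hu0, husucc⟩ : ∃ u : ℕ → ℕ, u 0 = max Q₀ 1 ∧ ∀ n, u (n + 1) = step (u n) :=
    ⟨fun n => step^[n] (max Q₀ 1), rfl, fun n => Function.iterate_succ_apply' step n _⟩
  have hbound : ∀ q, V q → q < step q ∧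
      ((1 + δ / 2) * (q:ℝ) < step q) ∧ ((step q : ℝ) ≤ (1 + δ) * q) ∧
      ((q:ℝ) ^ (-κ) ≤ nd ξ (step q)) ∧ nd ξ (step q) ≤ (1 + δ / 2) ^ (κ / 2) * (q:ℝ) ^ (-κ) := by
    intro q h
    rw [hstepdef, dif_pos h]
    obtain ⟨h1, h2, h3, h4⟩ := (hstepex q h).choose_spec
    refine ⟨?_, h1, h2, h3, h4⟩
    have hq0 : (0:ℝ) ≤ q := Nat.cast_nonneg q
    have hlt : (q:ℝ) < ((hstepex q h).choose : ℝ) := by nlinarith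
    exact_mod_cast hlt
  have hVmax : ∀ q, max Q₀ 1 ≤ q → V q := fun q hq => hQ₀ q (le_trans (le_max_left _ _) hq)
  have hmax : ∀ n, max Q₀ 1 ≤ u n := by
    intro n
    induction n with
    | zero => exact hu0.ge
    | succ n ih =>
      have h := (hbound (u n) (hVmax _ ih)).1
      rw [husucc]
      exact le_trans ih h.le
  have hVn : ∀ n, V (u n) := fun n => hVmax _ (hmax n)
  have hprop : ∀ n, ((1 + δ / 2) * (u n : ℝ) < u (n + 1)) ∧ ((u (n + 1) : ℝ) ≤ (1 + δ) * u n) ∧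
      ((u n : ℝ) ^ (-κ) ≤ nd ξ (u (n + 1))) ∧
      nd ξ (u (n + 1)) ≤ (1 + δ / 2) ^ (κ / 2) * (u n : ℝ) ^ (-κ) := by
    intro n
    rw [husucc]
    exact (hbound (u n) (hVn n)).2
  have hposn : ∀ n, 0 < u n := fun n => lt_of_lt_of_le (by omega : 0 < max Q₀ 1) (hmax n)
  have hmono : Monotone u := monotone_nat_of_le_succ (fun n => by
    rw [husucc]; exact (hbound (u n) (hVn n)).1.le)
  have hupos : ∀ n, (0:ℝ) < (u n : ℝ) := fun n => by exact_mod_cast hposn n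
  have hndpos : ∀ n, 0 < nd ξ (u n) := fun n => nd_pos hξ (hposn n)
  have hβle : betaExp u ≤ ((1 + δ : ℝ) : EReal) := by
    apply limsup_le_of_le (by isBoundedDefault)
    apply Eventually.of_forall
    intro n
    have h2 := (hprop n).2.1
    have hr : (u (n + 1) : ℝ) / (u n : ℝ) ≤ 1 + δ := by
      rw [div_le_iff₀ (hupos n)]
      linarith
    exact EReal.coe_le_coe_iff.2 hr
  have hβtop : betaExp u < ⊤ := lt_of_le_of_lt hβle (EReal.coe_lt_top _)
  have hA1 : (1 + δ / 2) ^ (-(κ / 2)) < 1 :=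
    Real.rpow_lt_one_of_one_lt_of_neg hbase (by linarith : -(κ / 2) < 0)
  have hA0 : (0:ℝ) < (1 + δ / 2) ^ (-(κ / 2)) := Real.rpow_pos_of_pos (by linarith) _
  have hαle : alphaExp ξ u ≤ (((1 + δ / 2) ^ (-(κ / 2)) : ℝ) : EReal) := by
    rw [alphaExp_eq]
    apply limsup_le_of_le (by isBoundedDefault)
    rw [eventually_atTop]
    refine ⟨1, fun n hn => ?_⟩
    obtain ⟨k, rfl⟩ : ∃ k, n = k + 1 := ⟨n - 1, by omega⟩
    have hup : nd ξ (u (k + 2)) ≤ (1 + δ / 2) ^ (κ / 2) * (u (k + 1) : ℝ) ^ (-κ) :=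
      (hprop (k + 1)).2.2.2
    have hdn : (u k : ℝ) ^ (-κ) ≤ nd ξ (u (k + 1)) := (hprop k).2.2.1
    have hgrow : (1 + δ / 2) * (u k : ℝ) < u (k + 1) := (hprop k).1
    have hmid : (u (k + 1) : ℝ) ^ (-κ) ≤ (1 + δ / 2) ^ (-κ) * (u k : ℝ) ^ (-κ) := by
      have h1 : ((1 + δ / 2) * (u k : ℝ)) ^ (-κ) = (1 + δ / 2) ^ (-κ) * (u k : ℝ) ^ (-κ) :=
        Real.mul_rpow (by linarith) (hupos k).le
      rw [← h1]
      exact rpow_neg_anti (mul_pos (by linarith) (hupos k)) hgrow.le hκ0.le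
    have hsplit : (1 + δ / 2) ^ (κ / 2) * (1 + δ / 2) ^ (-κ) = (1 + δ / 2) ^ (-(κ / 2)) := by
      rw [← Real.rpow_add (by linarith)]
      ring_nf
    have hcomb : nd ξ (u (k + 2)) ≤ (1 + δ / 2) ^ (-(κ / 2)) * ((u k : ℝ) ^ (-κ)) := by
      calc nd ξ (u (k + 2)) ≤ (1 + δ / 2) ^ (κ / 2) * (u (k + 1) : ℝ) ^ (-κ) := hup
      _ ≤ (1 + δ / 2) ^ (κ / 2) * ((1 + δ / 2) ^ (-κ) * (u k : ℝ) ^ (-κ)) :=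
          mul_le_mul_of_nonneg_left hmid (Real.rpow_nonneg (by linarith) _)
      _ = (1 + δ / 2) ^ (-(κ / 2)) * ((u k : ℝ) ^ (-κ)) := by rw [← hsplit]; ring
    have hratio : nd ξ (u (k + 2)) / nd ξ (u (k + 1)) ≤ (1 + δ / 2) ^ (-(κ / 2)) := by
      rw [div_le_iff₀ (hndpos (k + 1))]
      calc nd ξ (u (k + 2)) ≤ (1 + δ / 2) ^ (-(κ / 2)) * ((u k : ℝ) ^ (-κ)) := hcomb
      _ ≤ (1 + δ / 2) ^ (-(κ / 2)) * nd ξ (u (k + 1)) :=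
          mul_le_mul_of_nonneg_left hdn hA0.le
    exact EReal.coe_le_coe_iff.2 hratio
  have hαlt : alphaExp ξ u < 1 := by
    refine lt_of_le_of_lt hαle ?_
    exact_mod_cast hA1
  have hα0 : (0:EReal) ≤ alphaExp ξ u := alphaExp_nonneg ξ u
  have hβ1 : (1:EReal) ≤ betaExp u := betaExp_ge_one hmono hposn
  refine ⟨u, hmono, hposn, hαlt, hβtop, ?_⟩
  have hαbot : alphaExp ξ u ≠ ⊥ := (lt_of_lt_of_le (by simpa using EReal.bot_lt_coe 0) hα0).ne'
  have hβbot : betaExp u ≠ ⊥ := (lt_of_lt_of_le (by simpa using EReal.bot_lt_coe 1) hβ1).ne'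
  have ha : (alphaExp ξ u).toReal ≤ (1 + δ / 2) ^ (-(κ / 2)) := by
    have h := EReal.toReal_le_toReal hαle hαbot (EReal.coe_ne_top _)
    rwa [EReal.toReal_coe] at h
  have hb : (betaExp u).toReal ≤ 1 + δ := by
    have h := EReal.toReal_le_toReal hβle hβbot (EReal.coe_ne_top _)
    rwa [EReal.toReal_coe] at h
  have hb0 : 0 ≤ (betaExp u).toReal := by
    have hcoe : ((1:ℝ) : EReal) ≤ betaExp u := by
      rw [EReal.coe_one]; exact hβ1
    have h := EReal.toReal_le_toReal hcoe (EReal.coe_ne_bot _) hβtop.ne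
    rw [EReal.toReal_coe] at h
    linarith
  calc (alphaExp ξ u).toReal * (betaExp u).toReal ≤ 1 * (1 + δ) :=
      mul_le_mul (le_trans ha hA1.le) hb hb0 (by norm_num)
  _ = 1 + δ := one_mul _


theorem density_exponent_eq_zero_of_not_liouville (ξ : ℝ) (hξ : Irrational ξ)
    (h : irrationalityExponent ξ < ⊤) :
    densityExponent ξ = 0 := by
  obtain ⟨ν, c, hν, hc, hc1, hlow⟩ := exists_lower hξ h
  have hge : (0 : EReal) ≤ densityExponent ξ := by
    rw [densityExponent]
    apply le_sInf
    rintro x ⟨u, hmono, hpos, hα, hβ, rfl⟩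
    have hprod := one_le_prod hξ hmono hpos hα hβ
    have hsq : 1 ≤ Real.sqrt ((alphaExp ξ u).toReal * (betaExp u).toReal) :=
      Real.one_le_sqrt.2 hprod
    exact EReal.coe_nonneg.2 (Real.log_nonneg hsq)
  have hle : ∀ ε : ℝ, 0 < ε → densityExponent ξ ≤ (ε : EReal) := by
    intro ε hε
    have hδ0 : 0 < min ε (1 / 2) := lt_min hε (by norm_num)
    have hδ1 : min ε (1 / 2) ≤ 1 / 2 := min_le_right _ _
    obtain ⟨u, hmono, hpos, hα, hβ, hprod⟩ := exists_good hξ hν hc hc1 hlow hδ0 hδ1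
    have hsinf : densityExponent ξ ≤
        ((Real.log (Real.sqrt ((alphaExp ξ u).toReal * (betaExp u).toReal)) : ℝ) : EReal) := by
      rw [densityExponent]
      exact sInf_le ⟨u, hmono, hpos, hα, hβ, rfl⟩
    refine le_trans hsinf (EReal.coe_le_coe_iff.2 ?_)
    have hs1 : Real.sqrt ((alphaExp ξ u).toReal * (betaExp u).toReal) ≤
        1 + min ε (1 / 2) / 2 := by
      have h2 : (alphaExp ξ u).toReal * (betaExp u).toReal ≤ (1 + min ε (1 / 2) / 2) ^ 2 := by
        nlinarith
      calc Real.sqrt ((alphaExp ξ u).toReal * (betaExp u).toReal)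
          ≤ Real.sqrt ((1 + min ε (1 / 2) / 2) ^ 2) := Real.sqrt_le_sqrt h2
      _ = 1 + min ε (1 / 2) / 2 := Real.sqrt_sq (by linarith)
    have hεmin : min ε (1 / 2) ≤ ε := min_le_left _ _
    rcases le_or_gt (Real.sqrt ((alphaExp ξ u).toReal * (betaExp u).toReal)) 1 with hle1 | hgt1
    · have := Real.log_nonpos (Real.sqrt_nonneg _) hle1
      linarith
    · have hlog := Real.log_le_sub_one_of_pos
        (by linarith : 0 < Real.sqrt ((alphaExp ξ u).toReal * (betaExp u).toReal))
      linarith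
  by_contra hne
  have hlt : (0 : EReal) < densityExponent ξ := lt_of_le_of_ne hge (Ne.symm hne)
  rcases eq_or_ne (densityExponent ξ) ⊤ with htop | hntop
  · have h1 := hle 1 one_pos
    rw [htop] at h1
    exact (EReal.coe_lt_top 1 : ((1:ℝ):EReal) < ⊤).not_ge h1
  · have hnbot : densityExponent ξ ≠ ⊥ :=
      (lt_of_lt_of_le (by simpa using EReal.bot_lt_coe 0) hge).ne'
    have hcoe : (((densityExponent ξ).toReal : ℝ) : EReal) = densityExponent ξ :=
      EReal.coe_toReal hntop hnbot
    have htR : 0 < (densityExponent ξ).toReal := by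
      rw [← hcoe] at hlt
      exact_mod_cast hlt
    have h2 := hle ((densityExponent ξ).toReal / 2) (by linarith)
    rw [← hcoe] at h2
    have h3 : (densityExponent ξ).toReal ≤ (densityExponent ξ).toReal / 2 := by
      exact_mod_cast h2
    linarith
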